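/- arXiv:1901.08268 — 2 statements merged into one kernel-verified Lean document; each statement's English description precedes it below -/
import Mathlib

section
/- For α > 0 and β > -1, the right nabla fractional sum satisfies (∇_b^{-α} (b-t)^{\overline{β}}) = (Γ(β+1)/Γ(β+1+α)) · (b-t)^{\overline{α+β}} for t ∈ _{b-1}ℕ. -/
noncomputable def rising (x mu : ℝ) : ℝ :=
  if mu = 0 then 1 else Real.Gamma (x + mu) / Real.Gamma x

/-- Left nabla fractional sum of order `mu` starting at `a`, for a function on
`ℕ_a` represented as a sequence `f : ℕ → ℝ` with `f j = f(a + j)`; the value is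
taken at the point `z = a + n`. By convention the sum of order `0` is the identity. -/
noncomputable def nablaSumL (mu : ℝ) (f : ℕ → ℝ) (n : ℕ) : ℝ :=
  if mu = 0 then f n
  else (1 / Real.Gamma mu) *
    ∑ j ∈ Finset.Icc 1 n, rising ((n : ℝ) - (j : ℝ) + 1) (mu - 1) * f j

/-- Right nabla fractional sum of order `mu` ending at `b`, for a function on
`_bℕ` represented as a sequence `g : ℕ → ℝ` with `g i = g(b - i)`; the value is
taken at the point `z = b - m`. -/
noncomputable def nablaSumR (mu : ℝ) (g : ℕ → ℝ) (m : ℕ) : ℝ :=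
  if mu = 0 then g m
  else (1 / Real.Gamma mu) *
    ∑ i ∈ Finset.Icc 1 m, rising ((m : ℝ) - (i : ℝ) + 1) (mu - 1) * g i




open Finset Polynomial in
lemma pochVand (x y : ℝ) (m : ℕ) :
    ∑ k ∈ range (m+1), (m.choose k : ℝ) * (ascPochhammer ℝ k).eval x
      * (ascPochhammer ℝ (m-k)).eval y = (ascPochhammer ℝ m).eval (x+y) := by
  induction m with
  | zero => simp
  | succ m ih =>
    have h1 : ∑ k ∈ range (m+2), (m.choose k : ℝ) * (ascPochhammer ℝ k).eval x
        * (ascPochhammer ℝ (m+1-k)).eval y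
        = ∑ k ∈ range (m+1), (m.choose k : ℝ) * (ascPochhammer ℝ k).eval x
          * (ascPochhammer ℝ (m-k)).eval y * (y + (m-k : ℕ)) := by
      rw [Finset.sum_range_succ, Nat.choose_succ_self]
      simp only [Nat.cast_zero, zero_mul, add_zero]
      refine Finset.sum_congr rfl fun k hk => ?_
      have hk' : k ≤ m := Nat.lt_succ_iff.mp (Finset.mem_range.mp hk)
      have : m + 1 - k = (m - k) + 1 := by omega
      rw [this, ascPochhammer_succ_eval]; ring
    rw [Finset.sum_range_succ']
    have hsplit : ∀ k ∈ range (m+1),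
        ((m+1).choose (k+1) : ℝ) * (ascPochhammer ℝ (k+1)).eval x
          * (ascPochhammer ℝ (m+1-(k+1))).eval y
        = (m.choose k : ℝ) * (ascPochhammer ℝ k).eval x
            * (ascPochhammer ℝ (m-k)).eval y * (x + k)
          + (m.choose (k+1) : ℝ) * (ascPochhammer ℝ (k+1)).eval x
            * (ascPochhammer ℝ (m-k)).eval y := by
      intro k hk
      rw [Nat.choose_succ_succ, Nat.succ_sub_succ, ascPochhammer_succ_eval]
      push_cast; ring
    rw [Finset.sum_congr rfl hsplit, Finset.sum_add_distrib, add_assoc]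
    have hf0B : (∑ k ∈ range (m+1), (m.choose (k+1) : ℝ) * (ascPochhammer ℝ (k+1)).eval x
          * (ascPochhammer ℝ (m-k)).eval y)
        + ((m+1).choose 0 : ℝ) * (ascPochhammer ℝ 0).eval x
            * (ascPochhammer ℝ (m+1-0)).eval y
        = ∑ k ∈ range (m+1), (m.choose k : ℝ) * (ascPochhammer ℝ k).eval x
          * (ascPochhammer ℝ (m-k)).eval y * (y + (m-k : ℕ)) := by
      rw [← h1, Finset.sum_range_succ'
        (fun k => (m.choose k : ℝ) * (ascPochhammer ℝ k).eval x
          * (ascPochhammer ℝ (m+1-k)).eval y) (m+1)]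
      congr 1
      · refine Finset.sum_congr rfl fun k hk => ?_
        have : m + 1 - (k + 1) = m - k := by omega
        rw [this]
      · norm_num
    rw [hf0B, ← Finset.sum_add_distrib]
    have h4 : ∀ k ∈ range (m+1),
        (m.choose k : ℝ) * (ascPochhammer ℝ k).eval x * (ascPochhammer ℝ (m-k)).eval y * (x + k)
        + (m.choose k : ℝ) * (ascPochhammer ℝ k).eval x * (ascPochhammer ℝ (m-k)).eval y
            * (y + (m-k : ℕ))
        = ((m.choose k : ℝ) * (ascPochhammer ℝ k).eval x * (ascPochhammer ℝ (m-k)).eval y)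
            * (x + y + m) := by
      intro k hk
      have hk' : k ≤ m := Nat.lt_succ_iff.mp (Finset.mem_range.mp hk)
      have : ((m-k : ℕ) : ℝ) = (m:ℝ) - k := by rw [Nat.cast_sub hk']
      rw [this]; ring
    rw [Finset.sum_congr rfl h4, ← Finset.sum_mul, ih, ascPochhammer_succ_eval]

lemma Gamma_add_nat' (x : ℝ) (hx : 0 < x) (k : ℕ) :
    Real.Gamma (x + k) = Real.Gamma x * (ascPochhammer ℝ k).eval x := by
  induction k with
  | zero => simp
  | succ k ih =>
    have h : x + (k:ℝ) ≠ 0 := by positivity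
    have e : x + ((k+1 : ℕ):ℝ) = (x + k) + 1 := by push_cast; ring
    rw [e, Real.Gamma_add_one h, ih, ascPochhammer_succ_eval]; ring

lemma rising_eq' (k : ℕ) (μ : ℝ) (hμ : -1 < μ) :
    rising ((k:ℝ)+1) μ
      = Real.Gamma (μ+1) * (ascPochhammer ℝ k).eval (μ+1) / k.factorial := by
  have hf : (k.factorial : ℝ) ≠ 0 := by exact_mod_cast k.factorial_ne_zero
  by_cases h : μ = 0
  · subst h
    rw [show rising ((k:ℝ)+1) 0 = 1 from if_pos rfl, zero_add, Real.Gamma_one, one_mul,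
      ascPochhammer_eval_one, div_self hf]
  · rw [rising, if_neg h]
    have h1 : (k:ℝ) + 1 + μ = (μ+1) + k := by ring
    rw [h1, Gamma_add_nat' _ (by linarith) k, Real.Gamma_nat_eq_factorial]

theorem nablaSumR_rising_aux (α β : ℝ) (hα : 0 < α) (hβ : -1 < β) (n : ℕ) (hn : 1 ≤ n) :
    (if α = 0 then rising (n:ℝ) β
     else (1 / Real.Gamma α) *
       ∑ i ∈ Finset.Icc 1 n, rising ((n : ℝ) - (i : ℝ) + 1) (α - 1) * rising (i:ℝ) β)
      = (Real.Gamma (β + 1) / Real.Gamma (β + 1 + α)) * rising (n : ℝ) (α + β) := by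
  obtain ⟨m, rfl⟩ : ∃ m, n = m + 1 := ⟨n-1, (Nat.succ_pred_eq_of_pos hn).symm⟩
  rw [if_neg hα.ne']
  have hΓα : Real.Gamma α ≠ 0 := (Real.Gamma_pos_of_pos hα).ne'
  have hΓβ : Real.Gamma (β+1) ≠ 0 := (Real.Gamma_pos_of_pos (by linarith)).ne'
  have hΓs : Real.Gamma (β + 1 + α) ≠ 0 := (Real.Gamma_pos_of_pos (by linarith)).ne'
  have hm : ((m+1 : ℕ) : ℝ) = (m:ℝ) + 1 := by push_cast; ring
  -- RHS
  have hRHS : rising ((m+1 : ℕ) : ℝ) (α + β)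
      = Real.Gamma (α+β+1) * (ascPochhammer ℝ m).eval (α+β+1) / m.factorial := by
    rw [hm, rising_eq' m (α+β) (by linarith)]
  -- reindex sum
  have hsum : ∑ i ∈ Finset.Icc 1 (m+1), rising (((m+1:ℕ) : ℝ) - (i : ℝ) + 1) (α - 1)
        * rising (i:ℝ) β
      = ∑ k ∈ Finset.range (m+1), rising (((m+1:ℕ) : ℝ) - ((1+k : ℕ) : ℝ) + 1) (α - 1)
        * rising ((1+k : ℕ):ℝ) β := by
    rw [← Finset.Ico_add_one_right_eq_Icc, Finset.sum_Ico_eq_sum_range]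
    rfl
  rw [hsum, hRHS]
  have key : ∀ k ∈ Finset.range (m+1),
      rising (((m+1:ℕ) : ℝ) - ((1+k : ℕ) : ℝ) + 1) (α - 1) * rising ((1+k : ℕ):ℝ) β
      = (Real.Gamma α * Real.Gamma (β+1) / m.factorial)
        * ((m.choose k : ℝ) * (ascPochhammer ℝ k).eval (β+1)
            * (ascPochhammer ℝ (m-k)).eval (α)) := by
    intro k hk
    have hk' : k ≤ m := Nat.lt_succ_iff.mp (Finset.mem_range.mp hk)
    have e1 : ((m+1:ℕ) : ℝ) - ((1+k : ℕ) : ℝ) + 1 = ((m-k : ℕ) : ℝ) + 1 := by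
      rw [Nat.cast_sub hk']; push_cast; ring
    have e2 : ((1+k : ℕ):ℝ) = (k:ℝ) + 1 := by push_cast; ring
    rw [e1, e2, rising_eq' (m-k) (α-1) (by linarith), rising_eq' k β hβ]
    have e3 : α - 1 + 1 = α := by ring
    rw [e3, Nat.cast_choose ℝ hk']
    have hf1 : ((m-k).factorial : ℝ) ≠ 0 := by exact_mod_cast (m-k).factorial_ne_zero
    have hf2 : (k.factorial : ℝ) ≠ 0 := by exact_mod_cast k.factorial_ne_zero
    have hf3 : (m.factorial : ℝ) ≠ 0 := by exact_mod_cast m.factorial_ne_zero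
    field_simp
  rw [Finset.sum_congr rfl key, ← Finset.mul_sum, pochVand (β+1) α m]
  have e4 : β + 1 + α = α + β + 1 := by ring
  rw [e4]
  have hΓs' : Real.Gamma (α + β + 1) ≠ 0 := by rw [← e4]; exact hΓs
  have hf3 : (m.factorial : ℝ) ≠ 0 := by exact_mod_cast m.factorial_ne_zero
  field_simp

/-- Power rule for the right nabla fractional sum: for `α > 0`, `β > -1`, and
`t = b - n ∈ _{b-1}ℕ`, one has
`(∇_b^{-α}(b-·)^β‾)(t) = (Γ(β+1)/Γ(β+1+α)) (b-t)^(α+β)‾`.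
The function `s ↦ (b-s)^β‾` on `_bℕ` is the sequence `i ↦ i^β‾`, and `b - t = n`. -/
theorem nablaSumR_rising (α β : ℝ) (hα : 0 < α) (hβ : -1 < β) (n : ℕ) (hn : 1 ≤ n) :
    nablaSumR α (fun i => rising (i : ℝ) β) n
      = (Real.Gamma (β + 1) / Real.Gamma (β + 1 + α)) * rising (n : ℝ) (α + β) := by
  have h := nablaSumR_rising_aux α β hα hβ n hn
  rw [if_neg hα.ne'] at h
  rw [nablaSumR, if_neg hα.ne']
  exact h
end

section
/- For ν > 0 and a function f on ℕ_a, the nabla discrete Laplace transform of the left fractional sum satisfies (K_a(ₐ∇^{-ν}f))(s) = s^{-ν}·(K_a f)(s), assuming convergence. -/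
open Finset Filter Topology Set

namespace LaplaceAux

/-- The generalized binomial coefficient `Γ(ν+k)/(Γ(ν) k!)`. -/
noncomputable def c (ν : ℝ) (k : ℕ) : ℝ :=
  Real.Gamma (ν + k) / (Real.Gamma ν * k.factorial)

lemma c_pos {ν : ℝ} (hν : 0 < ν) (k : ℕ) : 0 < c ν k := by
  have h1 : (0:ℝ) < Real.Gamma (ν + k) := Real.Gamma_pos_of_pos (by positivity)
  have h2 : (0:ℝ) < Real.Gamma ν := Real.Gamma_pos_of_pos hν
  have h3 : (0:ℝ) < (k.factorial : ℝ) := by exact_mod_cast k.factorial_pos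
  exact div_pos h1 (mul_pos h2 h3)

lemma c_zero {ν : ℝ} (hν : 0 < ν) : c ν 0 = 1 := by
  have h2 : Real.Gamma ν ≠ 0 := (Real.Gamma_pos_of_pos hν).ne'
  simp [c, h2]

lemma c_succ {ν : ℝ} (hν : 0 < ν) (k : ℕ) :
    c ν (k + 1) = c ν k * (ν + k) / (k + 1) := by
  have hg : Real.Gamma (ν + ((k : ℝ) + 1)) = (ν + k) * Real.Gamma (ν + k) := by
    rw [show ν + ((k : ℝ) + 1) = (ν + k) + 1 by ring, Real.Gamma_add_one (by positivity)]
  have h1 : Real.Gamma ν ≠ 0 := (Real.Gamma_pos_of_pos hν).ne'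
  have h2 : ((k.factorial : ℝ)) ≠ 0 := by
    exact_mod_cast k.factorial_pos.ne'
  have h3 : ((k : ℝ) + 1) ≠ 0 := by positivity
  unfold c
  rw [Nat.factorial_succ]
  push_cast
  rw [hg]
  field_simp

lemma tendsto_ratio (a : ℝ) :
    Tendsto (fun k : ℕ => (a + (k : ℝ)) / ((k : ℝ) + 1)) atTop (𝓝 1) := by
  have h1 := (tendsto_const_div_atTop_nhds_zero_nat (a - 1)).comp (tendsto_add_atTop_nat 1)
  have h0 : Tendsto (fun k : ℕ => (a - 1) / ((k : ℝ) + 1)) atTop (𝓝 0) := by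
    refine h1.congr fun k => ?_
    simp only [Function.comp_apply, Nat.cast_add, Nat.cast_one]
  have h2 := h0.add_const 1
  rw [zero_add] at h2
  refine h2.congr fun k => ?_
  have hk : ((k : ℝ) + 1) ≠ 0 := by positivity
  field_simp
  ring

lemma summable_u {ν : ℝ} (hν : 0 < ν) {r : ℝ} (h0 : 0 < r) (h1 : r < 1) :
    Summable (fun k : ℕ => c ν k * ((k : ℝ) + 1) * r ^ k) := by
  apply summable_of_ratio_test_tendsto_lt_one h1
  · exact Eventually.of_forall fun k =>
      (mul_pos (mul_pos (c_pos hν k) (by positivity)) (by positivity)).ne'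
  · have hratio : ∀ k : ℕ,
        ‖c ν (k + 1) * (((k : ℕ) + 1 : ℕ) + 1 : ℝ) * r ^ (k + 1)‖ /
          ‖c ν k * ((k : ℝ) + 1) * r ^ k‖
        = ((ν + (k : ℝ)) / ((k : ℝ) + 1)) * ((2 + (k : ℝ)) / ((k : ℝ) + 1)) * r := by
      intro k
      have hc := c_pos hν k
      have hc1 := c_pos hν (k + 1)
      have hp := pow_pos h0 k
      rw [Real.norm_eq_abs, Real.norm_eq_abs,
        abs_of_pos (by push_cast; positivity), abs_of_pos (by positivity)]
      rw [c_succ hν k, pow_succ]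
      have h3 : ((k : ℝ) + 1) ≠ 0 := by positivity
      field_simp
      ring
      push_cast
      ring
    have ht := ((tendsto_ratio ν).mul (tendsto_ratio 2)).mul_const r
    rw [one_mul, one_mul] at ht
    exact ht.congr fun k => (hratio k).symm

lemma norm_term_le {ν : ℝ} (hν : 0 < ν) {r y : ℝ} (h0 : 0 < r) (hy : |y| ≤ r) (k : ℕ) :
    ‖c ν k * ((k : ℝ) * y ^ (k - 1))‖ ≤ (1 / r) * (c ν k * ((k : ℝ) + 1) * r ^ k) := by
  have hc := c_pos hν k
  cases k with
  | zero => simp; positivity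
  | succ m =>
    have hc' := c_pos hν (m + 1)
    have habs : ‖c ν (m + 1) * (((m + 1 : ℕ) : ℝ) * y ^ (m + 1 - 1))‖
        = c ν (m + 1) * (((m : ℝ) + 1) * |y| ^ m) := by
      rw [Real.norm_eq_abs, abs_mul, abs_of_pos hc', abs_mul, abs_pow]
      push_cast [Nat.add_sub_cancel]
      rw [abs_of_nonneg (by positivity : (0:ℝ) ≤ (m : ℝ) + 1)]
    rw [habs]
    push_cast
    have hym : |y| ^ m ≤ r ^ m := pow_le_pow_left₀ (abs_nonneg y) hy m
    calc c ν (m + 1) * (((m : ℝ) + 1) * |y| ^ m)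
        ≤ c ν (m + 1) * (((m : ℝ) + 2) * r ^ m) := by
          gcongr
          all_goals first | exact abs_nonneg y | exact hy | linarith
      _ = 1 / r * (c ν (m + 1) * ((m : ℝ) + 1 + 1) * r ^ (m + 1)) := by
          rw [pow_succ]
          field_simp
          ring

lemma norm_term_le' {ν : ℝ} (hν : 0 < ν) {r y : ℝ} (h0 : 0 < r) (h1 : r < 1)
    (hy : |y| ≤ r) (k : ℕ) :
    ‖c ν k * y ^ k‖ ≤ (1 / r) * (c ν k * ((k : ℝ) + 1) * r ^ k) := by
  have hc := c_pos hν k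
  have hp := pow_pos h0 k
  rw [Real.norm_eq_abs, abs_mul, abs_of_pos hc, abs_pow]
  have h2 : c ν k * |y| ^ k ≤ c ν k * r ^ k := by
    gcongr
    all_goals first | exact abs_nonneg y | exact hy
  have h3 : c ν k * r ^ k ≤ (1 / r) * (c ν k * ((k : ℝ) + 1) * r ^ k) := by
    rw [one_div, ← div_eq_inv_mul, le_div_iff₀ h0]
    have hk1 : r ≤ (k : ℝ) + 1 := by
      have : (0:ℝ) ≤ (k : ℝ) := Nat.cast_nonneg k
      linarith
    calc c ν k * r ^ k * r ≤ c ν k * r ^ k * ((k : ℝ) + 1) := by gcongr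
      _ = c ν k * ((k : ℝ) + 1) * r ^ k := by ring
  linarith

lemma summable_D {ν : ℝ} (hν : 0 < ν) {y : ℝ} (hy : |y| < 1) :
    Summable (fun k : ℕ => c ν k * ((k : ℝ) * y ^ (k - 1))) := by
  have h0 : 0 < (|y| + 1) / 2 := by positivity
  have h1 : (|y| + 1) / 2 < 1 := by linarith
  have h2 : |y| ≤ (|y| + 1) / 2 := by linarith
  exact Summable.of_norm_bounded ((summable_u hν h0 h1).mul_left (1 / ((|y| + 1) / 2)))
    (norm_term_le hν h0 h2)

lemma summable_F {ν : ℝ} (hν : 0 < ν) {y : ℝ} (hy : |y| < 1) :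
    Summable (fun k : ℕ => c ν k * y ^ k) := by
  have h0 : 0 < (|y| + 1) / 2 := by positivity
  have h1 : (|y| + 1) / 2 < 1 := by linarith
  have h2 : |y| ≤ (|y| + 1) / 2 := by linarith
  exact Summable.of_norm_bounded ((summable_u hν h0 h1).mul_left (1 / ((|y| + 1) / 2)))
    (norm_term_le' hν h0 h1 h2)

lemma hasDerivAt_F {ν : ℝ} (hν : 0 < ν) {y : ℝ} (hy : |y| < 1) :
    HasDerivAt (fun z : ℝ => ∑' k : ℕ, c ν k * z ^ k)
      (∑' k : ℕ, c ν k * ((k : ℝ) * y ^ (k - 1))) y := by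
  set r : ℝ := (|y| + 1) / 2 with hr
  have h0 : 0 < r := by positivity
  have h1 : r < 1 := by rw [hr]; linarith
  have hyr : |y| < r := by rw [hr]; linarith [abs_nonneg y]
  refine hasDerivAt_tsum_of_isPreconnected (u := fun k => (1 / r) * (c ν k * ((k : ℝ) + 1) * r ^ k))
    (t := Set.Ioo (-r) r) (y₀ := (0 : ℝ))
    ((summable_u hν h0 h1).mul_left (1 / r)) isOpen_Ioo isPreconnected_Ioo
    (fun n z _ => (hasDerivAt_pow n z).const_mul (c ν n))
    (fun n z hz => norm_term_le hν h0 (abs_le.mpr ⟨(hz.1).le, (hz.2).le⟩) n)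
    ?_ ?_ ?_
  · exact ⟨by linarith, h0⟩
  · refine summable_of_ne_finset_zero (s := {0}) fun n hn => ?_
    simp only [Finset.mem_singleton] at hn
    simp [zero_pow hn]
  · exact ⟨by cases abs_lt.mp hyr; linarith, (abs_lt.mp hyr).2⟩

lemma ode {ν : ℝ} (hν : 0 < ν) {y : ℝ} (hy : |y| < 1) :
    (1 - y) * (∑' k : ℕ, c ν k * ((k : ℝ) * y ^ (k - 1)))
      = ν * ∑' k : ℕ, c ν k * y ^ k := by
  have SD := summable_D hν hy
  have SF := summable_F hν hy
  have SD1 : Summable (fun k : ℕ => c ν k * ((ν + (k : ℝ)) * y ^ k)) := by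
    have h := (summable_nat_add_iff 1).mpr SD
    refine h.congr fun k => ?_
    simp only [Nat.add_sub_cancel]
    rw [c_succ hν k]
    have h3 : ((k : ℝ) + 1) ≠ 0 := by positivity
    push_cast
    field_simp
  have hD : (∑' k : ℕ, c ν k * ((k : ℝ) * y ^ (k - 1)))
      = ∑' k : ℕ, c ν k * ((ν + (k : ℝ)) * y ^ k) := by
    rw [Summable.tsum_eq_zero_add SD]
    simp only [Nat.cast_zero, zero_mul, mul_zero, zero_add]
    refine tsum_congr fun k => ?_
    simp only [Nat.add_sub_cancel]
    rw [c_succ hν k]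
    have h3 : ((k : ℝ) + 1) ≠ 0 := by positivity
    push_cast
    field_simp
  have hyD : y * (∑' k : ℕ, c ν k * ((k : ℝ) * y ^ (k - 1)))
      = ∑' k : ℕ, c ν k * ((k : ℝ) * y ^ k) := by
    rw [← tsum_mul_left]
    refine tsum_congr fun k => ?_
    cases k with
    | zero => simp
    | succ m =>
      simp only [Nat.add_sub_cancel]
      rw [pow_succ]
      push_cast
      ring
  have S2 : Summable (fun k : ℕ => c ν k * ((k : ℝ) * y ^ k)) := by
    have := SD.mul_left y
    refine this.congr fun k => ?_
    cases k with
    | zero => simp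
    | succ m =>
      simp only [Nat.add_sub_cancel]
      rw [pow_succ]
      push_cast
      ring
  have : (1 - y) * (∑' k : ℕ, c ν k * ((k : ℝ) * y ^ (k - 1)))
      = (∑' k : ℕ, c ν k * ((ν + (k : ℝ)) * y ^ k)) - ∑' k : ℕ, c ν k * ((k : ℝ) * y ^ k) := by
    rw [← hD, ← hyD]; ring
  rw [this, ← Summable.tsum_sub SD1 S2, ← tsum_mul_left]
  refine tsum_congr fun k => ?_
  ring

theorem binom {ν : ℝ} (hν : 0 < ν) {x : ℝ} (hx : |x| < 1) :
    ∑' k : ℕ, c ν k * x ^ k = (1 - x) ^ (-ν) := by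
  have hderiv : ∀ y : ℝ, |y| < 1 →
      HasDerivAt (fun z : ℝ => (1 - z) ^ ν * ∑' k : ℕ, c ν k * z ^ k) 0 y := by
    intro y hy
    have h1y : 0 < 1 - y := by cases abs_lt.mp hy; linarith
    have hpow : HasDerivAt (fun z : ℝ => (1 - z) ^ ν) (-1 * ν * (1 - y) ^ (ν - 1)) y := by
      have hid : HasDerivAt (fun z : ℝ => 1 - z) (-1 : ℝ) y := by
        simpa using (hasDerivAt_id y).const_sub 1
      exact hid.rpow_const (Or.inl h1y.ne')
    have hDF := hasDerivAt_F hν hy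
    have hmul := hpow.mul hDF
    refine hmul.congr_deriv ?_
    symm
    have hsplit : (1 - y) ^ ν = (1 - y) ^ (ν - 1) * (1 - y) := by
      have h := Real.rpow_add h1y (ν - 1) 1
      rw [sub_add_cancel, Real.rpow_one] at h
      exact h
    rw [hsplit]
    linear_combination (-(1 - y) ^ (ν - 1)) * (ode hν hy)
  have hF0 : (∑' k : ℕ, c ν k * (0:ℝ) ^ k) = 1 := by
    rw [tsum_eq_single 0 (fun k hk => by simp [zero_pow hk])]
    simpa using c_zero hν
  have hG0 : (1 - (0:ℝ)) ^ ν * (∑' k : ℕ, c ν k * (0:ℝ) ^ k) = 1 := by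
    rw [hF0]
    norm_num
  have hcst : (1 - x) ^ ν * (∑' k : ℕ, c ν k * x ^ k) = 1 := by
    rcases le_or_gt 0 x with hx0 | hx0
    · have h := constant_of_has_deriv_right_zero
        (f := fun z : ℝ => (1 - z) ^ ν * ∑' k : ℕ, c ν k * z ^ k) (a := (0:ℝ)) (b := x)
        (fun y hy => by
          have hy1 : |y| < 1 := by
            rw [abs_lt] at hx ⊢
            constructor <;> [linarith [hy.1]; linarith [hy.2, hx.2]]
          exact (hderiv y hy1).continuousAt.continuousWithinAt)
        (fun y hy => by
          have hy1 : |y| < 1 := by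
            rw [abs_lt] at hx ⊢
            constructor <;> [linarith [hy.1]; linarith [hy.2, hx.2]]
          exact (hderiv y hy1).hasDerivWithinAt)
      have h2 := h x (right_mem_Icc.mpr hx0)
      exact h2.trans hG0
    · have h := constant_of_has_deriv_right_zero
        (f := fun z : ℝ => (1 - z) ^ ν * ∑' k : ℕ, c ν k * z ^ k) (a := x) (b := (0:ℝ))
        (fun y hy => by
          have hy1 : |y| < 1 := by
            rw [abs_lt] at hx ⊢
            constructor <;> [linarith [hy.1, hx.1]; linarith [hy.2]]
          exact (hderiv y hy1).continuousAt.continuousWithinAt)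
        (fun y hy => by
          have hy1 : |y| < 1 := by
            rw [abs_lt] at hx ⊢
            constructor <;> [linarith [hy.1, hx.1]; linarith [hy.2]]
          exact (hderiv y hy1).hasDerivWithinAt)
      have h2 := h 0 (right_mem_Icc.mpr hx0.le)
      exact h2.symm.trans hG0
  have h1x : 0 < 1 - x := by cases abs_lt.mp hx; linarith
  rw [Real.rpow_neg h1x.le]
  exact eq_inv_of_mul_eq_one_left (by rw [mul_comm]; exact hcst)

end LaplaceAux

open LaplaceAux in
/-- The nabla discrete Laplace transform of the left fractional sum:
`(K_a(ₐ∇^{-ν}f))(s) = s^{-ν} (K_a f)(s)`, assuming convergence. -/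
theorem laplace_nablaSumL (ν s : ℝ) (f : ℕ → ℝ) (hν : 0 < ν) (hs : |1 - s| < 1)
    (hf : Summable (fun n : ℕ => |(1 - s) ^ n * f (n + 1)|))
    (hF : Summable (fun n : ℕ => |(1 - s) ^ n * nablaSumL ν f (n + 1)|)) :
    (∑' n : ℕ, (1 - s) ^ n * nablaSumL ν f (n + 1))
      = s ^ (-ν) * ∑' n : ℕ, (1 - s) ^ n * f (n + 1) := by
  set x : ℝ := 1 - s with hxdef
  have hx : |x| < 1 := hs
  have hνne : ν ≠ 0 := hν.ne'
  have hΓ : Real.Gamma ν ≠ 0 := (Real.Gamma_pos_of_pos hν).ne'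
  -- rewrite each coefficient of the transformed series as a convolution
  have key : ∀ n : ℕ, x ^ n * nablaSumL ν f (n + 1)
      = ∑ k ∈ Finset.range (n + 1), (c ν k * x ^ k) * (x ^ (n - k) * f ((n - k) + 1)) := by
    intro n
    rw [nablaSumL, if_neg hνne]
    have hreindex : ∑ j ∈ Finset.Icc 1 (n + 1),
        rising (((n + 1 : ℕ) : ℝ) - (j : ℝ) + 1) (ν - 1) * f j
        = ∑ k ∈ Finset.range (n + 1), rising ((k : ℝ) + 1) (ν - 1) * f (n + 1 - k) := by
      refine Finset.sum_nbij' (fun j => n + 1 - j) (fun k => n + 1 - k) ?_ ?_ ?_ ?_ ?_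
      · intro j hj
        simp only [Finset.mem_Icc] at hj
        simp only [Finset.mem_range]
        omega
      · intro k hk
        simp only [Finset.mem_range] at hk
        simp only [Finset.mem_Icc]
        omega
      · intro j hj
        simp only [Finset.mem_Icc] at hj
        show n + 1 - (n + 1 - j) = j
        omega
      · intro k hk
        simp only [Finset.mem_range] at hk
        show n + 1 - (n + 1 - k) = k
        omega
      · intro j hj
        simp only [Finset.mem_Icc] at hj
        show rising (((n + 1 : ℕ) : ℝ) - (j : ℝ) + 1) (ν - 1) * f j
          = rising (((n + 1 - j : ℕ) : ℝ) + 1) (ν - 1) * f (n + 1 - (n + 1 - j))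
        have hcast : ((n + 1 - j : ℕ) : ℝ) = ((n + 1 : ℕ) : ℝ) - (j : ℝ) := by
          rw [Nat.cast_sub hj.2]
        have hj2 : n + 1 - (n + 1 - j) = j := by omega
        rw [hcast, hj2]
    rw [hreindex]
    have hc_eq : ∀ k : ℕ, (1 / Real.Gamma ν) * rising ((k : ℝ) + 1) (ν - 1) = c ν k := by
      intro k
      by_cases h1 : ν = 1
      · subst h1
        rw [rising, if_pos (by ring)]
        have hk : ((k.factorial : ℝ)) ≠ 0 := by exact_mod_cast k.factorial_pos.ne'
        rw [c, show (1 : ℝ) + (k : ℝ) = (k : ℝ) + 1 by ring, Real.Gamma_nat_eq_factorial,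
          Real.Gamma_one]
        field_simp
      · rw [rising, if_neg (by intro h; exact h1 (by linarith [sub_eq_zero.mp h]))]
        rw [show (k : ℝ) + 1 + (ν - 1) = ν + (k : ℝ) by ring]
        rw [Real.Gamma_nat_eq_factorial]
        rw [c]
        field_simp
    rw [Finset.mul_sum, Finset.mul_sum]
    refine Finset.sum_congr rfl fun k hk => ?_
    simp only [Finset.mem_range] at hk
    have hkn : k ≤ n := Nat.lt_succ_iff.mp hk
    have hxpow : x ^ n = x ^ k * x ^ (n - k) := by
      rw [← pow_add]
      congr 1
      omega
    have hfidx : n + 1 - k = (n - k) + 1 := by omega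
    calc x ^ n * ((1 / Real.Gamma ν) * (rising ((k : ℝ) + 1) (ν - 1) * f (n + 1 - k)))
        = ((1 / Real.Gamma ν) * rising ((k : ℝ) + 1) (ν - 1)) * (x ^ n * f (n + 1 - k)) := by ring
      _ = (c ν k * x ^ k) * (x ^ (n - k) * f ((n - k) + 1)) := by
          rw [hc_eq k, hxpow, hfidx]; ring
  -- summability of the two factor series in norm
  have hnorm1 : Summable (fun k : ℕ => ‖c ν k * x ^ k‖) := by
    have h0 : 0 < (|x| + 1) / 2 := by positivity
    have h1 : (|x| + 1) / 2 < 1 := by linarith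
    have h2 : |x| ≤ (|x| + 1) / 2 := by linarith
    exact Summable.of_nonneg_of_le (fun k => norm_nonneg _)
      (norm_term_le' hν h0 h1 h2)
      ((summable_u hν h0 h1).mul_left (1 / ((|x| + 1) / 2)))
  have hnorm2 : Summable (fun m : ℕ => ‖x ^ m * f (m + 1)‖) := by
    simpa [Real.norm_eq_abs, abs_mul, abs_pow] using hf
  -- Cauchy product
  have hcauchy := tsum_mul_tsum_eq_tsum_sum_range_of_summable_norm hnorm1 hnorm2
  calc (∑' n : ℕ, x ^ n * nablaSumL ν f (n + 1))
      = ∑' n : ℕ, ∑ k ∈ Finset.range (n + 1),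
          (c ν k * x ^ k) * (x ^ (n - k) * f ((n - k) + 1)) := tsum_congr key
    _ = (∑' k : ℕ, c ν k * x ^ k) * ∑' m : ℕ, x ^ m * f (m + 1) := hcauchy.symm
    _ = s ^ (-ν) * ∑' n : ℕ, x ^ n * f (n + 1) := by
        rw [binom hν hx]
        congr 2
        rw [hxdef]; ring
end
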